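/- Fix s ∈ (0,1] and a sequence ρ : ℤ → ℂ with Σ_k|ρ_k|² < ∞. Define, for u : ℤ → ℂ with u_0 = 0, K̃(u)_k = −Σ_{k₁+k₂=k, k₁,k₂≠0} ρ_{k₁}u_{k₂}/(3k₁k₂) for k ≠ 0 and K̃(u)_0 = 0. Then for every u with u_0 = 0 and ‖u‖_{H^{−s}} < ∞: ‖K̃(u)‖_{H^{−s}} ≤ 2‖ρ‖_{ℓ²}‖u‖_{H^{−s}}. Consequently, if ‖ρ‖_{ℓ²} < 1/2 then ‖u + K̃(u)‖_{H^{−s}} ≥ (1 − 2‖ρ‖_{ℓ²})‖u‖_{H^{−s}} for all such u. -/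

import Mathlib

noncomputable section

def l2norm (v : ℤ → ℂ) : ℝ := Real.sqrt (∑' k : ℤ, ‖v k‖ ^ 2)

def hnegNorm (s : ℝ) (u : ℤ → ℂ) : ℝ :=
  Real.sqrt (∑' k : ℤ, ‖u k‖ ^ 2 * |(k : ℝ)| ^ (-2 * s))

/-- `K̃(u)_k = -Σ_{k₁+k₂=k, k₁,k₂≠0} ρ_{k₁} u_{k₂}/(3k₁k₂)`. -/
def Ktilde (ρ : ℤ → ℂ) (u : ℤ → ℂ) (k : ℤ) : ℂ :=
  if k = 0 then 0 else
    -∑' p : ℤ × ℤ,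
      if p.1 + p.2 = k ∧ p.1 ≠ 0 ∧ p.2 ≠ 0 then
        ρ p.1 * u p.2 / (3 * (p.1 : ℂ) * (p.2 : ℂ))
      else 0

open Real

lemma tsum_cs {f g : ℤ → ℝ} (hf0 : ∀ m, 0 ≤ f m) (hg0 : ∀ m, 0 ≤ g m)
    (hf : Summable fun m => f m ^ 2) (hg : Summable fun m => g m ^ 2) :
    ∑' m, f m * g m ≤ Real.sqrt (∑' m, f m ^ 2) * Real.sqrt (∑' m, g m ^ 2) := by
  have hfg : Summable fun m => f m * g m := by
    refine Summable.of_nonneg_of_le (fun m => mul_nonneg (hf0 m) (hg0 m)) (fun m => ?_)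
      ((hf.add hg).mul_left (1/2))
    nlinarith [sq_nonneg (f m - g m)]
  refine Summable.tsum_le_of_sum_le hfg fun A => ?_
  calc ∑ m ∈ A, f m * g m
      ≤ Real.sqrt (∑ m ∈ A, f m ^ 2) * Real.sqrt (∑ m ∈ A, g m ^ 2) :=
        Real.sum_mul_le_sqrt_mul_sqrt A f g
    _ ≤ Real.sqrt (∑' m, f m ^ 2) * Real.sqrt (∑' m, g m ^ 2) := by
        have a1 := Real.sqrt_le_sqrt (Summable.sum_le_tsum A (fun _ _ => sq_nonneg (f _)) hf)
        have a2 := Real.sqrt_le_sqrt (Summable.sum_le_tsum A (fun _ _ => sq_nonneg (g _)) hg)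
        exact mul_le_mul a1 a2 (Real.sqrt_nonneg _) (Real.sqrt_nonneg _)

lemma summable_inv_sq_int : Summable (fun j : ℤ => (((j:ℝ)) ^ 2)⁻¹) := by
  have := (Real.summable_one_div_int_pow (p := 2)).mpr one_lt_two
  simpa [one_div] using this

lemma tsum_inv_sq_int_le : ∑' j : ℤ, (((j:ℝ)) ^ 2)⁻¹ ≤ 4 := by
  have h1 : HasSum (fun n : ℕ => (1:ℝ) / (n:ℝ)^2) (π^2/6) := hasSum_zeta_two
  have h2 : HasSum (fun n : ℕ => ((((n:ℤ)):ℝ)^2)⁻¹) (π^2/6) := by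
    simpa [one_div] using h1
  have h3 : HasSum (fun n : ℕ => ((((-n:ℤ)):ℝ)^2)⁻¹) (π^2/6) := by
    simpa [one_div] using h1
  rw [Summable.tsum_of_nat_of_neg (f := fun j : ℤ => (((j:ℝ)) ^ 2)⁻¹) h2.summable h3.summable,
    h2.tsum_eq, h3.tsum_eq]
  have h4 : π < 3.15 := Real.pi_lt_d2
  have h5 : (0:ℝ) < π := Real.pi_pos
  norm_num
  nlinarith

lemma tsum_minkowski {f g : ℤ → ℝ} (hf0 : ∀ m, 0 ≤ f m) (hg0 : ∀ m, 0 ≤ g m)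
    (hf : Summable fun m => f m ^ 2) (hg : Summable fun m => g m ^ 2) :
    Real.sqrt (∑' m, (f m + g m) ^ 2) ≤
      Real.sqrt (∑' m, f m ^ 2) + Real.sqrt (∑' m, g m ^ 2) := by
  have hfg : Summable fun m => f m * g m := by
    refine Summable.of_nonneg_of_le (fun m => mul_nonneg (hf0 m) (hg0 m)) (fun m => ?_)
      ((hf.add hg).mul_left (1/2))
    nlinarith [sq_nonneg (f m - g m)]
  have key : ∑' m, (f m + g m) ^ 2
      ≤ (Real.sqrt (∑' m, f m ^ 2) + Real.sqrt (∑' m, g m ^ 2)) ^ 2 := by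
    have expand : ∀ m, (f m + g m) ^ 2 = f m ^ 2 + (2 * (f m * g m) + g m ^ 2) := by
      intro m; ring
    rw [tsum_congr expand, Summable.tsum_add hf ((hfg.mul_left 2).add hg),
      Summable.tsum_add (hfg.mul_left 2) hg, tsum_mul_left]
    have cs := tsum_cs hf0 hg0 hf hg
    have h1 : (0:ℝ) ≤ ∑' m, f m ^ 2 := tsum_nonneg fun m => sq_nonneg _
    have h2 : (0:ℝ) ≤ ∑' m, g m ^ 2 := tsum_nonneg fun m => sq_nonneg _
    have e1 : Real.sqrt (∑' m, f m ^ 2) ^ 2 = ∑' m, f m ^ 2 := Real.sq_sqrt h1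
    have e2 : Real.sqrt (∑' m, g m ^ 2) ^ 2 = ∑' m, g m ^ 2 := Real.sq_sqrt h2
    nlinarith
  calc Real.sqrt (∑' m, (f m + g m) ^ 2)
      ≤ Real.sqrt ((Real.sqrt (∑' m, f m ^ 2) + Real.sqrt (∑' m, g m ^ 2)) ^ 2) :=
        Real.sqrt_le_sqrt key
    _ = _ := Real.sqrt_sq (by positivity)

set_option maxHeartbeats 1200000 in
lemma key_lemma (s : ℝ) (hs0 : 0 < s) (hs1 : s ≤ 1) (ρ : ℤ → ℂ)
    (hρ : Summable fun k : ℤ => ‖ρ k‖ ^ 2) (u : ℤ → ℂ)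
    (hu : Summable (fun k : ℤ => ‖u k‖ ^ 2 * |(k : ℝ)| ^ (-2 * s))) :
    Summable (fun k : ℤ => ‖Ktilde ρ u k‖ ^ 2 * |(k : ℝ)| ^ (-2 * s)) ∧
    hnegNorm s (Ktilde ρ u) ≤ 2 * l2norm ρ * hnegNorm s u := by
  have hm0 : ∀ k : ℤ, 0 ≤ ‖u k‖ ^ 2 * |(k : ℝ)| ^ (-2 * s) :=
    fun k => mul_nonneg (sq_nonneg _) (Real.rpow_nonneg (abs_nonneg _) _)
  have hexp : -s + -s = -2 * s := by ring
  have hexpne : -s + -s ≠ 0 := by intro h; nlinarith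
  have hrsq : ∀ k : ℤ, (|(k:ℝ)| ^ (-s)) ^ 2 = |(k:ℝ)| ^ (-2 * s) := by
    intro k
    rw [sq, ← Real.rpow_add' (abs_nonneg _) hexpne, hexp]
  -- the product-summability setup
  set Q : ℤ × ℤ → ℝ := fun p => ‖ρ (p.1 - p.2)‖ ^ 2 * (‖u p.2‖ ^ 2 * |(p.2 : ℝ)| ^ (-2 * s))
    with hQdef
  have hQ0 : ∀ p, 0 ≤ Q p := fun p => mul_nonneg (sq_nonneg _) (hm0 _)
  have hP : Summable (fun p : ℤ × ℤ => ‖ρ p.1‖ ^ 2 * (‖u p.2‖ ^ 2 * |(p.2 : ℝ)| ^ (-2 * s))) :=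
    hρ.mul_of_nonneg hu (fun k => sq_nonneg _) hm0
  let e : ℤ × ℤ ≃ ℤ × ℤ :=
    { toFun := fun p => (p.1 + p.2, p.2)
      invFun := fun p => (p.1 - p.2, p.2)
      left_inv := fun p => by simp
      right_inv := fun p => by simp }
  have hcomp : ∀ p : ℤ × ℤ, Q (e p) = ‖ρ p.1‖ ^ 2 * (‖u p.2‖ ^ 2 * |(p.2 : ℝ)| ^ (-2 * s)) := by
    intro p
    show Q (p.1 + p.2, p.2) = _
    simp only [hQdef]
    simp
  have hQ : Summable Q := e.summable_iff.mp (hP.congr fun p => (hcomp p).symm)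
  have htQ : ∑' p, Q p = (∑' k, ‖ρ k‖ ^ 2) * (∑' k, ‖u k‖ ^ 2 * |(k : ℝ)| ^ (-2 * s)) := by
    rw [← e.tsum_eq Q, tsum_congr hcomp]
    calc ∑' p : ℤ × ℤ, ‖ρ p.1‖ ^ 2 * (‖u p.2‖ ^ 2 * |(p.2 : ℝ)| ^ (-2 * s))
        = ∑' a : ℤ, ∑' b : ℤ, ‖ρ a‖ ^ 2 * (‖u b‖ ^ 2 * |(b : ℝ)| ^ (-2 * s)) :=
          Summable.tsum_prod' hP (fun b => hu.mul_left (‖ρ b‖ ^ 2))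
      _ = ∑' a : ℤ, ‖ρ a‖ ^ 2 * ∑' b : ℤ, ‖u b‖ ^ 2 * |(b : ℝ)| ^ (-2 * s) := by
          simp_rw [tsum_mul_left]
      _ = _ := tsum_mul_right
  obtain ⟨hQfiber, hΦs⟩ := (summable_prod_of_nonneg hQ0).mp hQ
  set Φ : ℤ → ℝ := fun k => ∑' j, Q (k, j) with hΦdef
  have hΦ0 : ∀ k, 0 ≤ Φ k := fun k => tsum_nonneg fun j => hQ0 _
  have htΦ : ∑' k, Φ k = (∑' k, ‖ρ k‖ ^ 2) * (∑' k, ‖u k‖ ^ 2 * |(k : ℝ)| ^ (-2 * s)) :=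
    (Summable.tsum_prod' hQ hQfiber).symm.trans htQ
  -- pointwise bound
  have hpoint : ∀ k : ℤ, ‖Ktilde ρ u k‖ ^ 2 * |(k : ℝ)| ^ (-2 * s) ≤ (4/9) * Φ k := by
    intro k
    by_cases hk : k = 0
    · subst hk
      have : Ktilde ρ u 0 = 0 := by rw [Ktilde, if_pos rfl]
      rw [this]
      simp only [norm_zero]
      have := hΦ0 0
      nlinarith
    · set F : ℤ × ℤ → ℂ := fun p =>
        if p.1 + p.2 = k ∧ p.1 ≠ 0 ∧ p.2 ≠ 0 then
          ρ p.1 * u p.2 / (3 * (p.1 : ℂ) * (p.2 : ℂ)) else 0 with hF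
      have hKF : Ktilde ρ u k = -∑' p, F p := by rw [Ktilde, if_neg hk]
      set f₁ : ℤ → ℝ := fun j => ‖ρ (k - j)‖ * (‖u j‖ * |(j:ℝ)| ^ (-s)) with hf₁
      set f₂ : ℤ → ℝ := fun j => (1/3) * |((k - j : ℤ):ℝ)|⁻¹ with hf₂
      have hf₁0 : ∀ j, 0 ≤ f₁ j := fun j =>
        mul_nonneg (norm_nonneg _)
          (mul_nonneg (norm_nonneg _) (Real.rpow_nonneg (abs_nonneg _) _))
      have hf₂0 : ∀ j, 0 ≤ f₂ j := fun j =>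
        mul_nonneg (by norm_num) (inv_nonneg.mpr (abs_nonneg _))
      have hFle : ∀ j : ℤ, ‖F (k - j, j)‖ ≤ f₁ j * f₂ j := by
        intro j
        by_cases hc : (k - j) + j = k ∧ k - j ≠ 0 ∧ j ≠ 0
        · simp only [hF]
          rw [if_pos hc]
          obtain ⟨-, h1, h2⟩ := hc
          have hj1 : (1:ℝ) ≤ |(j:ℝ)| := by
            have := Int.one_le_abs h2
            calc (1:ℝ) = ((1:ℤ):ℝ) := by norm_num
              _ ≤ ((|j|:ℤ):ℝ) := by exact_mod_cast this
              _ = |(j:ℝ)| := by push_cast; ring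
          have hnorm : ‖ρ (k - j) * u j / (3 * ((k - j : ℤ) : ℂ) * ((j : ℤ) : ℂ))‖
              = ‖ρ (k - j)‖ * ‖u j‖ / (3 * |((k - j : ℤ):ℝ)| * |(j:ℝ)|) := by
            rw [norm_div, norm_mul, norm_mul, norm_mul, Complex.norm_intCast,
              Complex.norm_intCast]
            norm_num
          rw [hnorm]
          have hb : |(j:ℝ)|⁻¹ ≤ |(j:ℝ)| ^ (-s) := by
            rw [← Real.rpow_neg_one]
            exact Real.rpow_le_rpow_of_exponent_le hj1 (by linarith)
          calc ‖ρ (k - j)‖ * ‖u j‖ / (3 * |((k - j : ℤ):ℝ)| * |(j:ℝ)|)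
              = (‖ρ (k - j)‖ * ‖u j‖ * ((1/3) * |((k - j : ℤ):ℝ)|⁻¹)) * |(j:ℝ)|⁻¹ := by
                rw [div_eq_mul_inv, mul_inv, mul_inv]; ring
            _ ≤ (‖ρ (k - j)‖ * ‖u j‖ * ((1/3) * |((k - j : ℤ):ℝ)|⁻¹)) * |(j:ℝ)| ^ (-s) := by
                refine mul_le_mul_of_nonneg_left hb ?_
                positivity
            _ = f₁ j * f₂ j := by rw [hf₁, hf₂]; ring
        · simp only [hF]
          rw [if_neg hc, norm_zero]
          exact mul_nonneg (hf₁0 j) (hf₂0 j)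
      have hf₁sq : ∀ j, f₁ j ^ 2 = Q (k, j) := by
        intro j
        rw [hf₁, hQdef]
        simp only [mul_pow]
        rw [hrsq j]
      have hf₂sq : ∀ j, f₂ j ^ 2 = (1/9) * ((((k - j : ℤ):ℝ)) ^ 2)⁻¹ := by
        intro j
        rw [hf₂, mul_pow, ← sq_abs (((k - j : ℤ):ℝ))]
        norm_num
      have hf₁s : Summable fun j => f₁ j ^ 2 := (hQfiber k).congr fun j => (hf₁sq j).symm
      have hsub : Summable fun j : ℤ => ((((k - j : ℤ):ℝ)) ^ 2)⁻¹ := by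
        have := (Equiv.subLeft k).summable_iff.mpr summable_inv_sq_int
        exact this.congr fun j => by simp
      have hf₂s : Summable fun j => f₂ j ^ 2 :=
        (hsub.mul_left (1/9)).congr fun j => (hf₂sq j).symm
      have hf₂tsum : ∑' j, f₂ j ^ 2 ≤ 4/9 := by
        rw [tsum_congr hf₂sq, tsum_mul_left]
        have heq : ∑' j : ℤ, ((((k - j : ℤ):ℝ)) ^ 2)⁻¹ = ∑' j : ℤ, (((j:ℝ)) ^ 2)⁻¹ := by
          have h := (Equiv.subLeft k).tsum_eq (fun j : ℤ => (((j:ℝ)) ^ 2)⁻¹)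
          simpa using h
        rw [heq]
        nlinarith [tsum_inv_sq_int_le]
      have hf₁f₂s : Summable fun j => f₁ j * f₂ j := by
        refine Summable.of_nonneg_of_le (fun j => mul_nonneg (hf₁0 j) (hf₂0 j)) (fun j => ?_)
          ((hf₁s.add hf₂s).mul_left (1/2))
        nlinarith [sq_nonneg (f₁ j - f₂ j)]
      have hgs : Summable fun j => ‖F (k - j, j)‖ :=
        Summable.of_nonneg_of_le (fun j => norm_nonneg _) hFle hf₁f₂s
      have hinj : Function.Injective (fun j : ℤ => ((k - j, j) : ℤ × ℤ)) := by
        intro a b h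
        exact congrArg Prod.snd h
      have hrange : ∀ p : ℤ × ℤ, p ∉ Set.range (fun j : ℤ => ((k - j, j) : ℤ × ℤ)) →
          ‖F p‖ = 0 := by
        intro p hp
        have hcond : ¬(p.1 + p.2 = k ∧ p.1 ≠ 0 ∧ p.2 ≠ 0) := by
          intro hc
          refine hp ⟨p.2, ?_⟩
          show (k - p.2, p.2) = p
          have h1 : p.1 = k - p.2 := by omega
          rw [← h1]
        simp only [hF]
        rw [if_neg hcond, norm_zero]
      have hFs : Summable fun p => ‖F p‖ :=
        (Function.Injective.summable_iff hinj hrange).mp hgs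
      have hsupp : Function.support (fun p => ‖F p‖) ⊆
          Set.range (fun j : ℤ => ((k - j, j) : ℤ × ℤ)) := by
        intro p hp
        by_contra h
        exact hp (hrange p h)
      have hnormK : ‖Ktilde ρ u k‖ ≤ ∑' j, ‖F (k - j, j)‖ := by
        rw [hKF, norm_neg]
        calc ‖∑' p, F p‖ ≤ ∑' p, ‖F p‖ := norm_tsum_le_tsum_norm hFs
          _ = ∑' j, ‖F (k - j, j)‖ := (Function.Injective.tsum_eq hinj hsupp).symm
      have hchain : ∑' j, ‖F (k - j, j)‖ ≤ Real.sqrt (Φ k) * (2/3) := by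
        calc ∑' j, ‖F (k - j, j)‖ ≤ ∑' j, f₁ j * f₂ j := Summable.tsum_le_tsum hFle hgs hf₁f₂s
          _ ≤ Real.sqrt (∑' j, f₁ j ^ 2) * Real.sqrt (∑' j, f₂ j ^ 2) :=
              tsum_cs hf₁0 hf₂0 hf₁s hf₂s
          _ ≤ Real.sqrt (Φ k) * (2/3) := by
              have e1 : ∑' j, f₁ j ^ 2 = Φ k := tsum_congr hf₁sq
              rw [e1]
              refine mul_le_mul_of_nonneg_left ?_ (Real.sqrt_nonneg _)
              calc Real.sqrt (∑' j, f₂ j ^ 2) ≤ Real.sqrt (4/9) := Real.sqrt_le_sqrt hf₂tsum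
                _ = 2/3 := by
                    rw [show (4/9:ℝ) = (2/3)^2 by norm_num]
                    exact Real.sqrt_sq (by norm_num)
      have hKk : ‖Ktilde ρ u k‖ ≤ Real.sqrt (Φ k) * (2/3) := hnormK.trans hchain
      have hw1 : |(k:ℝ)| ^ (-2 * s) ≤ 1 := by
        refine Real.rpow_le_one_of_one_le_of_nonpos ?_ (by linarith)
        have := Int.one_le_abs hk
        calc (1:ℝ) = ((1:ℤ):ℝ) := by norm_num
          _ ≤ ((|k|:ℤ):ℝ) := by exact_mod_cast this
          _ = |(k:ℝ)| := by push_cast; ring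
      calc ‖Ktilde ρ u k‖ ^ 2 * |(k:ℝ)| ^ (-2 * s)
          ≤ ‖Ktilde ρ u k‖ ^ 2 * 1 := mul_le_mul_of_nonneg_left hw1 (sq_nonneg _)
        _ = ‖Ktilde ρ u k‖ ^ 2 := mul_one _
        _ ≤ (Real.sqrt (Φ k) * (2/3)) ^ 2 := pow_le_pow_left₀ (norm_nonneg _) hKk 2
        _ = (4/9) * Φ k := by rw [mul_pow, Real.sq_sqrt (hΦ0 k)]; ring
  have hKs : Summable (fun k : ℤ => ‖Ktilde ρ u k‖ ^ 2 * |(k : ℝ)| ^ (-2 * s)) := by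
    refine Summable.of_nonneg_of_le (fun k => mul_nonneg (sq_nonneg _)
      (Real.rpow_nonneg (abs_nonneg _) _)) hpoint (hΦs.mul_left (4/9))
  refine ⟨hKs, ?_⟩
  have hT : ∑' k, ‖Ktilde ρ u k‖ ^ 2 * |(k:ℝ)| ^ (-2 * s)
      ≤ (4/9) * ((∑' k, ‖ρ k‖ ^ 2) * (∑' k, ‖u k‖ ^ 2 * |(k : ℝ)| ^ (-2 * s))) := by
    calc ∑' k, ‖Ktilde ρ u k‖ ^ 2 * |(k:ℝ)| ^ (-2 * s)
        ≤ ∑' k, (4/9) * Φ k := Summable.tsum_le_tsum hpoint hKs (hΦs.mul_left _)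
      _ = (4/9) * ∑' k, Φ k := tsum_mul_left
      _ = _ := by rw [htΦ]
  have hA2 : (0:ℝ) ≤ ∑' k, ‖ρ k‖ ^ 2 := tsum_nonneg fun _ => sq_nonneg _
  have hU2 : (0:ℝ) ≤ ∑' k, ‖u k‖ ^ 2 * |(k : ℝ)| ^ (-2 * s) := tsum_nonneg hm0
  unfold hnegNorm l2norm
  calc Real.sqrt (∑' k, ‖Ktilde ρ u k‖ ^ 2 * |(k:ℝ)| ^ (-2 * s))
      ≤ Real.sqrt ((4/9) * ((∑' k, ‖ρ k‖ ^ 2) * (∑' k, ‖u k‖ ^ 2 * |(k : ℝ)| ^ (-2 * s)))) :=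
        Real.sqrt_le_sqrt hT
    _ ≤ Real.sqrt (4 * ((∑' k, ‖ρ k‖ ^ 2) * (∑' k, ‖u k‖ ^ 2 * |(k : ℝ)| ^ (-2 * s)))) := by
        refine Real.sqrt_le_sqrt ?_
        nlinarith [mul_nonneg hA2 hU2]
    _ = 2 * Real.sqrt (∑' k, ‖ρ k‖ ^ 2) *
          Real.sqrt (∑' k, ‖u k‖ ^ 2 * |(k : ℝ)| ^ (-2 * s)) := by
        rw [show 4 * ((∑' k, ‖ρ k‖ ^ 2) * (∑' k, ‖u k‖ ^ 2 * |(k : ℝ)| ^ (-2 * s)))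
            = (2 * Real.sqrt (∑' k, ‖ρ k‖ ^ 2) *
                Real.sqrt (∑' k, ‖u k‖ ^ 2 * |(k : ℝ)| ^ (-2 * s))) ^ 2 by
          rw [mul_pow, mul_pow, Real.sq_sqrt hA2, Real.sq_sqrt hU2]; ring]
        exact Real.sqrt_sq (by positivity)

theorem Ktilde_operator_bound
    (s : ℝ) (hs0 : 0 < s) (hs1 : s ≤ 1)
    (ρ : ℤ → ℂ) (hρ : Summable fun k : ℤ => ‖ρ k‖ ^ 2) :
    (∀ u : ℤ → ℂ, u 0 = 0 →
      Summable (fun k : ℤ => ‖u k‖ ^ 2 * |(k : ℝ)| ^ (-2 * s)) →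
      hnegNorm s (Ktilde ρ u) ≤ 2 * l2norm ρ * hnegNorm s u) ∧
    (l2norm ρ < 1 / 2 →
      ∀ u : ℤ → ℂ, u 0 = 0 →
        Summable (fun k : ℤ => ‖u k‖ ^ 2 * |(k : ℝ)| ^ (-2 * s)) →
        hnegNorm s (fun k => u k + Ktilde ρ u k) ≥ (1 - 2 * l2norm ρ) * hnegNorm s u) := by
  constructor
  · intro u _ hu
    exact (key_lemma s hs0 hs1 ρ hρ u hu).2
  · intro _ u _ hu
    obtain ⟨hKs, hKle⟩ := key_lemma s hs0 hs1 ρ hρ u hu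
    have hexp : -s + -s = -2 * s := by ring
    have hexpne : -s + -s ≠ 0 := by intro h; nlinarith
    have hrsq : ∀ k : ℤ, (|(k:ℝ)| ^ (-s)) ^ 2 = |(k:ℝ)| ^ (-2 * s) := by
      intro k
      rw [sq, ← Real.rpow_add' (abs_nonneg _) hexpne, hexp]
    have hr0 : ∀ k : ℤ, (0:ℝ) ≤ |(k:ℝ)| ^ (-s) := fun k => Real.rpow_nonneg (abs_nonneg _) _
    set f : ℤ → ℝ := fun k => ‖u k + Ktilde ρ u k‖ * |(k:ℝ)| ^ (-s) with hfdef
    set g : ℤ → ℝ := fun k => ‖Ktilde ρ u k‖ * |(k:ℝ)| ^ (-s) with hgdef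
    have hf0 : ∀ k, 0 ≤ f k := fun k => mul_nonneg (norm_nonneg _) (hr0 k)
    have hg0 : ∀ k, 0 ≤ g k := fun k => mul_nonneg (norm_nonneg _) (hr0 k)
    have hgsq : ∀ k, g k ^ 2 = ‖Ktilde ρ u k‖ ^ 2 * |(k:ℝ)| ^ (-2 * s) := by
      intro k; rw [hgdef]; simp only [mul_pow]; rw [hrsq]
    have hfsq : ∀ k, f k ^ 2 = ‖u k + Ktilde ρ u k‖ ^ 2 * |(k:ℝ)| ^ (-2 * s) := by
      intro k; rw [hfdef]; simp only [mul_pow]; rw [hrsq]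
    have hg2 : Summable fun k => g k ^ 2 := hKs.congr fun k => (hgsq k).symm
    have hf2 : Summable fun k => f k ^ 2 := by
      refine Summable.of_nonneg_of_le (fun k => sq_nonneg _) (fun k => ?_)
        ((hu.add hKs).mul_left 2)
      rw [hfsq k]
      have h1 : ‖u k + Ktilde ρ u k‖ ≤ ‖u k‖ + ‖Ktilde ρ u k‖ := norm_add_le _ _
      have h2 : ‖u k + Ktilde ρ u k‖ ^ 2 ≤ 2 * ‖u k‖ ^ 2 + 2 * ‖Ktilde ρ u k‖ ^ 2 := by
        nlinarith [sq_nonneg (‖u k‖ - ‖Ktilde ρ u k‖), norm_nonneg (u k + Ktilde ρ u k),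
          norm_nonneg (u k), norm_nonneg (Ktilde ρ u k)]
      have h3 : (0:ℝ) ≤ |(k:ℝ)| ^ (-2 * s) := Real.rpow_nonneg (abs_nonneg _) _
      calc ‖u k + Ktilde ρ u k‖ ^ 2 * |(k:ℝ)| ^ (-2 * s)
          ≤ (2 * ‖u k‖ ^ 2 + 2 * ‖Ktilde ρ u k‖ ^ 2) * |(k:ℝ)| ^ (-2 * s) :=
            mul_le_mul_of_nonneg_right h2 h3
        _ = 2 * (‖u k‖ ^ 2 * |(k:ℝ)| ^ (-2 * s) + ‖Ktilde ρ u k‖ ^ 2 * |(k:ℝ)| ^ (-2 * s)) := by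
            ring
    have hfg2 : Summable fun k => (f k + g k) ^ 2 := by
      refine Summable.of_nonneg_of_le (fun k => sq_nonneg _) (fun k => ?_)
        ((hf2.add hg2).mul_left 2)
      nlinarith [sq_nonneg (f k - g k)]
    have mono : ∑' k, ‖u k‖ ^ 2 * |(k:ℝ)| ^ (-2 * s) ≤ ∑' k, (f k + g k) ^ 2 := by
      refine Summable.tsum_le_tsum (fun k => ?_) hu hfg2
      have h1 : ‖u k‖ ≤ ‖u k + Ktilde ρ u k‖ + ‖Ktilde ρ u k‖ := by
        calc ‖u k‖ = ‖(u k + Ktilde ρ u k) - Ktilde ρ u k‖ := by rw [add_sub_cancel_right]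
          _ ≤ _ := norm_sub_le _ _
      have h2 : ‖u k‖ * |(k:ℝ)| ^ (-s) ≤ f k + g k := by
        rw [hfdef, hgdef]
        calc ‖u k‖ * |(k:ℝ)| ^ (-s)
            ≤ (‖u k + Ktilde ρ u k‖ + ‖Ktilde ρ u k‖) * |(k:ℝ)| ^ (-s) :=
              mul_le_mul_of_nonneg_right h1 (hr0 k)
          _ = _ := by ring
      calc ‖u k‖ ^ 2 * |(k:ℝ)| ^ (-2 * s) = (‖u k‖ * |(k:ℝ)| ^ (-s)) ^ 2 := by
            rw [mul_pow, hrsq]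
        _ ≤ (f k + g k) ^ 2 := pow_le_pow_left₀ (by positivity) h2 2
    have step1 : hnegNorm s u
        ≤ hnegNorm s (fun k => u k + Ktilde ρ u k) + hnegNorm s (Ktilde ρ u) := by
      unfold hnegNorm
      calc Real.sqrt (∑' k, ‖u k‖ ^ 2 * |(k:ℝ)| ^ (-2 * s))
          ≤ Real.sqrt (∑' k, (f k + g k) ^ 2) := Real.sqrt_le_sqrt mono
        _ ≤ Real.sqrt (∑' k, f k ^ 2) + Real.sqrt (∑' k, g k ^ 2) :=
            tsum_minkowski hf0 hg0 hf2 hg2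
        _ = _ := by rw [tsum_congr hfsq, tsum_congr hgsq]
    have hA0 : 0 ≤ l2norm ρ := Real.sqrt_nonneg _
    have hN0 : 0 ≤ hnegNorm s u := Real.sqrt_nonneg _
    have hh0 : 0 ≤ hnegNorm s (fun k => u k + Ktilde ρ u k) := Real.sqrt_nonneg _
    have : hnegNorm s u ≤ hnegNorm s (fun k => u k + Ktilde ρ u k) + 2 * l2norm ρ * hnegNorm s u :=
      step1.trans (by linarith [hKle])
    show hnegNorm s (fun k => u k + Ktilde ρ u k) ≥ (1 - 2 * l2norm ρ) * hnegNorm s u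
    nlinarith
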